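/- For all integers 1 ≤ p_1 ≤ ... ≤ p_d ≤ n, every weakly K^d_{p_1,...,p_d}-saturated d-uniform d-partite hypergraph with n vertices per class has at least n^d − q_n(p_1,...,p_d) edges; combining with the matching construction, W_n(p_1,...,p_d) = n^d − q_n(p_1,...,p_d). -/

import Mathlib

/-- The `i`-th smallest entry (with multiplicity) of the tuple `x`. -/
def sortedNth {d : ℕ} (x : Fin d → ℕ) (i : Fin d) : ℕ :=
  x (Tuple.sort x i)

/-- The `d`-tuples with entries in `[n] = {1,…,n}`. -/
def tuples (n d : ℕ) : Finset (Fin d → ℕ) :=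
  Fintype.piFinset fun _ => Finset.Icc 1 n

/-- `q_n(p_1,…,p_d)`: the number of `x ∈ [n]^d` whose `i`-th smallest
entry is at least `p_i` for every `i`. -/
def qn (n d : ℕ) (p : Fin d → ℕ) : ℕ :=
  ((tuples n d).filter fun x => ∀ i, p i ≤ sortedNth x i).card

/-- The classes `S_1,…,S_d` span a copy of `K^d_{p_1,…,p_d}` in some
orientation: for some permutation `π`, `|S_i| = p_{π(i)}`. -/
def IsBox {n d : ℕ} (p : Fin d → ℕ) (S : Fin d → Finset (Fin n)) : Prop :=
  ∃ π : Equiv.Perm (Fin d), ∀ i, (S i).card = p (π i)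

/-- A `d`-uniform `d`-partite hypergraph with `n` vertices per class, given
by its edge set `E ⊆ V_1 × ⋯ × V_d`, is weakly `K^d_{p_1,…,p_d}`-saturated
if its non-edges can be ordered as a list `l` so that each newly added edge
lies in a copy of `K^d_{p_1,…,p_d}` (in any orientation) all of whose edges
are already present. -/
def WeakSatHyp (n d : ℕ) (p : Fin d → ℕ) (E : Finset (Fin d → Fin n)) : Prop :=
  ∃ l : List (Fin d → Fin n), l.Nodup ∧ (∀ e, e ∈ l ↔ e ∉ E) ∧
    ∀ k : Fin l.length, ∃ S : Fin d → Finset (Fin n),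
      IsBox p S ∧ l.get k ∈ Fintype.piFinset S ∧
      Fintype.piFinset S ⊆ E ∪ (l.take (k + 1)).toFinset

/-- `W_n(p_1,…,p_d)`: the minimum number of edges of a weakly
`K^d_{p_1,…,p_d}`-saturated `d`-uniform `d`-partite hypergraph with `n`
vertices per class. -/
noncomputable def WHyp (n d : ℕ) (p : Fin d → ℕ) : ℕ :=
  sInf {m | ∃ E : Finset (Fin d → Fin n), WeakSatHyp n d p E ∧ E.card = m}

open Matrix in
lemma vand_ker {m : ℕ} (t : Fin m → ℚ) (ht : Function.Injective t) (c : Fin m → ℚ)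
    (h : ∀ k : Fin m, ∑ a, c a * t a ^ (k : ℕ) = 0) : c = 0 := by
  classical
  set A : Matrix (Fin m) (Fin m) ℚ := Matrix.vandermonde t with hA
  have hdet : A.det ≠ 0 := by
    rw [hA, Matrix.det_vandermonde]
    refine Finset.prod_ne_zero_iff.2 fun i _ => Finset.prod_ne_zero_iff.2 fun j hj => ?_
    have hne : t i ≠ t j := fun e => by
      have := ht e; subst this; simp at hj
    intro hz
    exact hne (by linarith [sub_eq_zero.mp hz])
  have hv : Matrix.vecMul c A = 0 := by
    funext k
    simpa [Matrix.vecMul, dotProduct, Matrix.vandermonde, hA] using h k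
  by_contra hc
  exact hdet (Matrix.exists_vecMul_eq_zero_iff.mp ⟨c, hc, hv⟩)

lemma gamma_exists {n : ℕ} (S : Finset (Fin n)) (hS : S.Nonempty) :
    ∃ γ : Fin n → ℚ, (∀ a ∈ S, γ a ≠ 0) ∧ (∀ a ∉ S, γ a = 0) ∧
      ∀ m : ℕ, m + 1 < S.card → ∑ a, γ a * (a : ℚ) ^ m = 0 := by
  classical
  obtain ⟨s', hs⟩ : ∃ s', S.card = s' + 1 :=
    ⟨S.card - 1, (Nat.succ_pred_eq_of_pos hS.card_pos).symm⟩
  let e : {x // x ∈ S} ≃ Fin (s' + 1) := S.equivFin.trans (finCongr hs)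
  let node : Fin (s' + 1) → ℚ := fun j => ((e.symm j : Fin n) : ℚ)
  have hnode : Function.Injective node := by
    intro i j hij
    apply e.symm.injective
    simp only [node] at hij
    apply Subtype.ext
    have : ((e.symm i : Fin n) : ℕ) = ((e.symm j : Fin n) : ℕ) := by exact_mod_cast hij
    exact Fin.ext this
  let A : Matrix (Fin (s' + 1)) (Fin (s' + 1)) ℚ :=
    fun a k => if (k : ℕ) < s' then node a ^ (k : ℕ) else 0
  have hdet : A.det = 0 := by
    apply Matrix.det_eq_zero_of_column_eq_zero (Fin.last s')
    intro a
    simp [A]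
  obtain ⟨v, hv0, hv⟩ := Matrix.exists_vecMul_eq_zero_iff.mpr hdet
  have hvec : ∀ m : ℕ, m < s' → ∑ j, v j * node j ^ m = 0 := by
    intro m hm
    have := congrFun hv ⟨m, hm.trans (Nat.lt_succ_self s')⟩
    simpa [Matrix.vecMul, dotProduct, A, hm] using this
  have hfull : ∀ j₀, v j₀ ≠ 0 := by
    intro j₀ hz
    apply hv0
    have hc : (fun i => v (j₀.succAbove i)) = 0 := by
      apply vand_ker (fun i => node (j₀.succAbove i))
        (hnode.comp (Fin.succAbove_right_injective))
      intro k
      have := hvec (k : ℕ) k.isLt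
      rw [Fin.sum_univ_succAbove _ j₀, hz, zero_mul, zero_add] at this
      exact this
    funext j
    rcases eq_or_ne j j₀ with rfl | hne
    · exact hz
    · obtain ⟨i, hi⟩ := Fin.exists_succAbove_eq hne
      rw [← hi]
      exact congrFun hc i
  refine ⟨fun a => if h : a ∈ S then v (e ⟨a, h⟩) else 0, ?_, ?_, ?_⟩
  · intro a ha
    simpa [ha] using hfull (e ⟨a, ha⟩)
  · intro a ha; simp [ha]
  · intro m hm
    rw [hs] at hm
    have step1 : ∑ a, (if h : a ∈ S then v (e ⟨a, h⟩) else 0) * (a : ℚ) ^ m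
        = ∑ a ∈ S, (if h : a ∈ S then v (e ⟨a, h⟩) else 0) * (a : ℚ) ^ m := by
      rw [← Finset.sum_subset (Finset.subset_univ S)]
      intro a _ ha
      simp [ha]
    have step2 : ∑ a ∈ S, (if h : a ∈ S then v (e ⟨a, h⟩) else 0) * (a : ℚ) ^ m
        = ∑ j, v j * node j ^ m := by
      rw [← Finset.sum_coe_sort S (fun a => (if h : a ∈ S then v (e ⟨a, h⟩) else 0) * (a : ℚ) ^ m)]
      rw [← Equiv.sum_comp e (fun j => v j * node j ^ m)]
      apply Finset.sum_congr rfl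
      intro x _
      simp [node]
    rw [step1, step2]
    exact hvec m (by omega)

def wfam (n d : ℕ) : (Fin d → Fin n) → ((Fin d → Fin n) → ℚ) :=
  fun x k => ∏ i, ((x i : ℚ)) ^ (k i : ℕ)

lemma fincast_inj (n : ℕ) : Function.Injective (fun a : Fin n => (a : ℚ)) := by
  intro a b h
  have h' : ((a:ℕ):ℚ) = ((b:ℕ):ℚ) := h
  exact Fin.ext (Nat.cast_injective h')

lemma wfam_indep (n : ℕ) : ∀ d, LinearIndependent ℚ (wfam n d) := by
  intro d
  induction d with
  | zero =>
    rw [Fintype.linearIndependent_iff]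
    intro g hg x
    have := congrFun hg (fun i => i.elim0)
    have hx : x = fun i => i.elim0 := by funext i; exact i.elim0
    simp only [Finset.sum_apply, Pi.smul_apply, smul_eq_mul, Pi.zero_apply, wfam] at this
    rw [hx]
    have h2 : g default = 0 := by simpa using this
    convert h2 using 2
  | succ d ih =>
    rw [Fintype.linearIndependent_iff] at ih ⊢
    intro g hg x
    have key : ∀ a : Fin n, ∀ y : Fin d → Fin n, g (Fin.cons a y) = 0 := by
      intro a
      apply ih (fun y => g (Fin.cons a y))
      funext k'
      have hc : (fun a : Fin n => ∑ y : Fin d → Fin n, g (Fin.cons a y) * wfam n d y k') = 0 := by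
        apply vand_ker (fun a : Fin n => (a : ℚ)) (fincast_inj n)
        intro m
        have h0 := congrFun hg (Fin.cons m k')
        simp only [Finset.sum_apply, Pi.smul_apply, smul_eq_mul, Pi.zero_apply] at h0
        rw [← Fintype.sum_equiv (Fin.consEquiv (fun _ : Fin (d+1) => Fin n))
          (fun q => g (Fin.cons q.1 q.2) * wfam n (d+1) (Fin.cons q.1 q.2) (Fin.cons m k'))
          (fun x => g x * wfam n (d+1) x (Fin.cons m k')) ?_] at h0
        · rw [← h0, Fintype.sum_prod_type]
          apply Finset.sum_congr rfl
          intro a _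
          rw [Finset.sum_mul]
          apply Finset.sum_congr rfl
          intro y _
          have : wfam n (d+1) (Fin.cons a y) (Fin.cons m k')
              = (a : ℚ) ^ (m : ℕ) * wfam n d y k' := by
            simp only [wfam, Fin.prod_univ_succ, Fin.cons_zero, Fin.cons_succ]
          rw [this]
          ring
        · intro q
          rcases q with ⟨a, y⟩
          rfl
      simp only [Finset.sum_apply, Pi.smul_apply, smul_eq_mul, Pi.zero_apply]
      simpa using congrFun hc a
    have hx : x = Fin.cons (x 0) (Fin.tail x) := (Fin.cons_self_tail x).symm
    rw [hx]
    exact key _ _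

lemma key_sorted {d : ℕ} (p : Fin d → ℕ) (hmono : Monotone p) (y : Fin d → ℕ) :
    (∀ i, p i ≤ sortedNth y i) ↔ ∃ π : Equiv.Perm (Fin d), ∀ i, p (π i) ≤ y i := by
  constructor
  · intro h
    refine ⟨(Tuple.sort y)⁻¹, fun i => ?_⟩
    have := h ((Tuple.sort y)⁻¹ i)
    unfold sortedNth at this
    rwa [← Equiv.Perm.mul_apply, mul_inv_cancel, Equiv.Perm.one_apply] at this
  · rintro ⟨π, hπ⟩ i
    by_contra hlt
    push_neg at hlt
    set σ := Tuple.sort y with hσ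
    have hmon : Monotone (y ∘ σ) := Tuple.monotone_sort y
    have hmap : ∀ j ∈ Finset.Iic i, π (σ j) ∈ Finset.Iio i := by
      intro j hj
      rw [Finset.mem_Iic] at hj
      rw [Finset.mem_Iio]
      have h1 : y (σ j) ≤ y (σ i) := hmon hj
      have h2 : p (π (σ j)) ≤ y (σ j) := hπ (σ j)
      have h3 : y (σ i) < p i := hlt
      by_contra hge
      push_neg at hge
      exact absurd (hmono hge) (by omega)
    have hinj : Set.InjOn (fun j => π (σ j)) (Finset.Iic i) := by
      intro a _ b _ hab
      exact σ.injective (π.injective hab)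
    have hcard := Finset.card_le_card_of_injOn _ hmap hinj
    rw [Fin.card_Iic, Fin.card_Iio] at hcard
    omega

def Qset (n d : ℕ) (p : Fin d → ℕ) : Finset (Fin d → Fin n) :=
  Finset.univ.filter fun x => ∀ i, p i ≤ sortedNth (fun j => (x j : ℕ) + 1) i

lemma card_Qset (n d : ℕ) (p : Fin d → ℕ) : (Qset n d p).card = qn n d p := by
  classical
  apply Finset.card_bij (fun x _ => fun j => (x j : ℕ) + 1)
  · intro x hx
    rw [Finset.mem_filter]
    constructor
    · rw [tuples, Fintype.mem_piFinset]
      intro j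
      rw [Finset.mem_Icc]
      exact ⟨by omega, by have := (x j).isLt; omega⟩
    · rw [Qset, Finset.mem_filter] at hx
      exact hx.2
  · intro x hx y hy hxy
    funext j
    have := congrFun hxy j
    exact Fin.ext (by omega)
  · intro b hb
    rw [Finset.mem_filter] at hb
    obtain ⟨hb1, hb2⟩ := hb
    rw [tuples, Fintype.mem_piFinset] at hb1
    have hbj : ∀ j, 1 ≤ b j ∧ b j ≤ n := fun j => Finset.mem_Icc.mp (hb1 j)
    refine ⟨fun j => ⟨b j - 1, by have := hbj j; omega⟩, ?_, ?_⟩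
    · rw [Qset, Finset.mem_filter]
      refine ⟨Finset.mem_univ _, ?_⟩
      have he : (fun j => ((b j - 1 : ℕ)) + 1) = b := by
        funext j; have := hbj j; omega
      intro i
      simpa [he] using hb2 i
    · funext j
      have := hbj j; simp; omega

lemma mem_span_single {ι : Type*} [Fintype ι] [DecidableEq ι] (Q : Finset ι) (v : ι → ℚ)
    (hv : ∀ k ∉ Q, v k = 0) :
    v ∈ Submodule.span ℚ ((fun k => Pi.single k (1 : ℚ)) '' (Q : Set ι)) := by
  have hrepr : v = ∑ k ∈ Q, v k • (Pi.single k (1 : ℚ) : ι → ℚ) := by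
    funext j
    rw [Finset.sum_apply]
    by_cases hj : j ∈ Q
    · rw [Finset.sum_eq_single j (fun b _ hb => by simp [Pi.single_apply, hb]) (fun h => absurd hj h)]
      simp
    · rw [hv j hj]
      symm
      apply Finset.sum_eq_zero
      intro k hk
      have : k ≠ j := fun h => hj (h ▸ hk)
      simp [Pi.single_apply, this]
  rw [hrepr]
  exact Submodule.sum_mem _ fun k hk =>
    Submodule.smul_mem _ _ (Submodule.subset_span ⟨k, hk, rfl⟩)

lemma lower_bound (n d : ℕ) (p : Fin d → ℕ) (hmono : Monotone p) (hp1 : ∀ i, 1 ≤ p i)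
    (E : Finset (Fin d → Fin n)) (hE : WeakSatHyp n d p E) :
    n ^ d - qn n d p ≤ E.card := by
  classical
  obtain ⟨l, hnd, hmem, hbox⟩ := hE
  set M : Submodule ℚ ((Fin d → Fin n) → ℚ) :=
    Submodule.span ℚ ((fun k => Pi.single k (1 : ℚ)) '' ((Qset n d p : Set (Fin d → Fin n)))) with hM
  set U : Submodule ℚ ((Fin d → Fin n) → ℚ) :=
    M ⊔ Submodule.span ℚ (wfam n d '' (E : Set (Fin d → Fin n))) with hU
  have hEU : ∀ x ∈ E, wfam n d x ∈ U := fun x hx =>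
    Submodule.mem_sup_right (Submodule.subset_span ⟨x, hx, rfl⟩)
  have hltU : ∀ k : ℕ, ∀ hk : k < l.length, wfam n d (l.get ⟨k, hk⟩) ∈ U := by
    intro k
    induction k using Nat.strong_induction_on with
    | _ k IH =>
    intro hk
    obtain ⟨S, ⟨π, hπ⟩, hxS, hSsub⟩ := hbox ⟨k, hk⟩
    set x := l.get ⟨k, hk⟩ with hxdef
    have hSne : ∀ i, (S i).Nonempty := by
      intro i
      rw [← Finset.card_pos, hπ i]
      exact hp1 _
    choose γ hγ1 hγ2 hγ3 using fun i => gamma_exists (S i) (hSne i)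
    set c : (Fin d → Fin n) → ℚ := fun f => ∏ i, γ i (f i) with hc
    set Z : (Fin d → Fin n) → ℚ := ∑ f ∈ Fintype.piFinset S, c f • wfam n d f with hZ
    have hZval : ∀ k' : Fin d → Fin n, Z k' = ∏ i, ∑ a, γ i a * (a : ℚ) ^ (k' i : ℕ) := by
      intro k'
      have hzero : ∀ f ∈ Finset.univ, f ∉ Fintype.piFinset S →
          (c f • wfam n d f) k' = 0 := by
        intro f _ hf
        rw [Fintype.mem_piFinset] at hf
        push_neg at hf
        obtain ⟨i, hi⟩ := hf
        simp only [Pi.smul_apply, smul_eq_mul, hc]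
        rw [Finset.prod_eq_zero (Finset.mem_univ i) (hγ2 i _ hi)]
        ring
      rw [hZ, Finset.sum_apply,
        Finset.sum_subset (Finset.subset_univ (Fintype.piFinset S)) hzero,
        Finset.prod_univ_sum]
      rw [show Fintype.piFinset (fun _ : Fin d => (Finset.univ : Finset (Fin n)))
        = Finset.univ from Fintype.piFinset_univ]
      apply Finset.sum_congr rfl
      intro f _
      simp only [Pi.smul_apply, smul_eq_mul, hc, wfam]
      rw [← Finset.prod_mul_distrib]
    have hZM : Z ∈ M := by
      rw [hM]
      apply mem_span_single
      intro k' hk'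
      rw [hZval]
      have hnall : ¬ ∀ i, p (π i) ≤ (k' i : ℕ) + 1 := by
        intro hall
        apply hk'
        rw [Qset, Finset.mem_filter]
        exact ⟨Finset.mem_univ _, (key_sorted p hmono _).mpr ⟨π, fun i => hall i⟩⟩
      push_neg at hnall
      obtain ⟨i, hi⟩ := hnall
      apply Finset.prod_eq_zero (Finset.mem_univ i)
      apply hγ3
      rw [hπ i]
      omega
    have hrest : ∑ f ∈ Fintype.piFinset S \ {x}, c f • wfam n d f ∈ U := by
      apply Submodule.sum_mem
      intro f hf
      rw [Finset.mem_sdiff, Finset.mem_singleton] at hf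
      obtain ⟨hf1, hf2⟩ := hf
      apply Submodule.smul_mem
      have hmem2 := hSsub hf1
      rw [Finset.mem_union] at hmem2
      rcases hmem2 with hfE | hft
      · exact hEU f hfE
      · rw [List.mem_toFinset] at hft
        obtain ⟨j, hj, hjf⟩ := List.mem_iff_getElem.mp hft
        have hj' : j < min (k + 1) l.length := by simpa using hj
        have hjlen : j < l.length := by omega
        have hjk1 : j < k + 1 := by omega
        rw [List.getElem_take] at hjf
        have hjk : j < k := by
          rcases Nat.lt_or_ge j k with h | h
          · exact h
          · exfalso
            have : j = k := by omega
            subst this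
            exact hf2 (by rw [← hjf]; rfl)
        have := IH j hjk hjlen
        rwa [show l.get ⟨j, hjlen⟩ = f from hjf] at this
    have hcx : c x ≠ 0 := by
      rw [hc]
      apply Finset.prod_ne_zero_iff.mpr
      intro i _
      exact hγ1 i _ ((Fintype.mem_piFinset.mp hxS) i)
    have hsplit : c x • wfam n d x = Z - ∑ f ∈ Fintype.piFinset S \ {x}, c f • wfam n d f := by
      rw [hZ, Finset.sum_eq_sum_sdiff_singleton_add hxS]
      abel
    have hin : c x • wfam n d x ∈ U :=
      hsplit ▸ Submodule.sub_mem _ (Submodule.mem_sup_left hZM) hrest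
    have := Submodule.smul_mem U (c x)⁻¹ hin
    rwa [inv_smul_smul₀ hcx] at this
  have hall : ∀ x : Fin d → Fin n, wfam n d x ∈ U := by
    intro x
    by_cases hx : x ∈ E
    · exact hEU x hx
    · have hxl : x ∈ l := (hmem x).mpr hx
      obtain ⟨j, hj⟩ := List.mem_iff_get.mp hxl
      rw [← hj]
      exact hltU j.1 j.2
  have h1 : Submodule.span ℚ (Set.range (wfam n d)) ≤ U :=
    Submodule.span_le.mpr (Set.range_subset_iff.mpr hall)
  have hfr1 : Module.finrank ℚ (Submodule.span ℚ (Set.range (wfam n d))) = n ^ d := by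
    rw [finrank_span_eq_card (wfam_indep n d)]
    simp
  have hMle : Module.finrank ℚ M ≤ qn n d p := by
    have himg : ((fun k => Pi.single k (1 : ℚ)) '' ((Qset n d p : Set (Fin d → Fin n))))
        = (((Qset n d p).image (fun k => (Pi.single k (1 : ℚ) : (Fin d → Fin n) → ℚ))) :
            Set ((Fin d → Fin n) → ℚ)) := by
      rw [Finset.coe_image]
    rw [hM, himg]
    calc Module.finrank ℚ (Submodule.span ℚ _) ≤ ((Qset n d p).image _).card :=
          finrank_span_finset_le_card _
      _ ≤ (Qset n d p).card := Finset.card_image_le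
      _ = qn n d p := card_Qset n d p
  have hEle : Module.finrank ℚ (Submodule.span ℚ (wfam n d '' (E : Set (Fin d → Fin n))))
      ≤ E.card := by
    have himg : (wfam n d '' (E : Set (Fin d → Fin n)))
        = ((E.image (wfam n d)) : Set ((Fin d → Fin n) → ℚ)) := by
      rw [Finset.coe_image]
    rw [himg]
    calc Module.finrank ℚ (Submodule.span ℚ _) ≤ (E.image (wfam n d)).card :=
          finrank_span_finset_le_card _
      _ ≤ E.card := Finset.card_image_le
  have hsup := Submodule.finrank_sup_add_finrank_inf_eq M
    (Submodule.span ℚ (wfam n d '' (E : Set (Fin d → Fin n))))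
  have hUle : Module.finrank ℚ U ≤ qn n d p + E.card := by
    rw [hU]
    omega
  have hmono2 : Module.finrank ℚ (Submodule.span ℚ (Set.range (wfam n d)))
      ≤ Module.finrank ℚ U := Submodule.finrank_mono h1
  omega

lemma upper_sat (n d : ℕ) (p : Fin d → ℕ) (hmono : Monotone p) (hp1 : ∀ i, 1 ≤ p i)
    (hpn : ∀ i, p i ≤ n) :
    WeakSatHyp n d p (Finset.univ \ Qset n d p) := by
  classical
  set key : (Fin d → Fin n) → ℕ := fun x => ∑ i, (x i : ℕ) with hkey
  set lef : (Fin d → Fin n) → (Fin d → Fin n) → Bool :=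
    fun x y => decide (key x ≤ key y) with hlef
  set l : List (Fin d → Fin n) := (Qset n d p).toList.mergeSort lef with hl
  have hperm : l.Perm (Qset n d p).toList := List.mergeSort_perm _ _
  have hnodup : l.Nodup := hperm.nodup_iff.mpr (Finset.nodup_toList _)
  have hmeml : ∀ e, e ∈ l ↔ e ∈ Qset n d p := by
    intro e
    rw [hperm.mem_iff, Finset.mem_toList]
  have hsorted : List.Pairwise (fun a b => key a ≤ key b) l := by
    have h := List.pairwise_mergeSort (le := lef)
      (fun a b c h1 h2 => by
        simp only [hlef, decide_eq_true_eq] at h1 h2 ⊢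
        omega)
      (fun a b => by
        simp only [hlef, Bool.or_eq_true, decide_eq_true_eq]
        omega)
      (Qset n d p).toList
    rw [← hl] at h
    exact h.imp (fun hab => by simpa [hlef] using hab)
  refine ⟨l, hnodup, ?_, ?_⟩
  · intro e
    rw [hmeml e, Finset.mem_sdiff]
    simp
  · intro k
    set x := l.get k with hx
    have hxl : x ∈ l := by
      rw [hx, List.get_eq_getElem]
      exact List.getElem_mem k.isLt
    have hxQ : x ∈ Qset n d p := (hmeml x).mp hxl
    rw [Qset, Finset.mem_filter] at hxQ
    obtain ⟨π, hπ⟩ := (key_sorted p hmono _).mp hxQ.2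
    have hlo : ∀ i, (x i : ℕ) + 1 - p (π i) < n := by
      intro i
      have h1 := hp1 (π i)
      have := (x i).isLt
      omega
    set lo : ∀ _ : Fin d, Fin n := fun i => ⟨(x i : ℕ) + 1 - p (π i), hlo i⟩ with hlodef
    set S : Fin d → Finset (Fin n) := fun i => Finset.Icc (lo i) (x i) with hS
    refine ⟨S, ⟨π, fun i => ?_⟩, ?_, ?_⟩
    · rw [hS, Fin.card_Icc]
      simp only [hlodef]
      have := hπ i
      have h1 := hp1 (π i)
      omega
    · rw [Fintype.mem_piFinset]
      intro i
      rw [hS, Finset.mem_Icc]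
      refine ⟨?_, le_refl _⟩
      rw [Fin.le_def]
      simp only [hlodef]
      have h1 := hp1 (π i)
      have h2 := hπ i
      omega
    · intro f hf
      rw [Fintype.mem_piFinset] at hf
      have hfle : ∀ i, (f i : ℕ) ≤ (x i : ℕ) := by
        intro i
        have := (Finset.mem_Icc.mp (hf i)).2
        rwa [Fin.le_def] at this
      rw [Finset.mem_union]
      by_cases hfE : f ∈ Finset.univ \ Qset n d p
      · exact Or.inl hfE
      · right
        rw [List.mem_toFinset]
        have hfQ : f ∈ Qset n d p := by
          by_contra h
          exact hfE (Finset.mem_sdiff.mpr ⟨Finset.mem_univ f, h⟩)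
        have hfl : f ∈ l := (hmeml f).mpr hfQ
        rcases eq_or_ne f x with rfl | hne
        · have hklen : (k : ℕ) < (l.take ((k : ℕ) + 1)).length := by
            simp only [List.length_take]
            have := k.isLt
            omega
          have heq : (l.take ((k : ℕ) + 1))[(k : ℕ)]'hklen = l[(k : ℕ)]'k.isLt :=
            List.getElem_take
          have hxe : x = (l.take ((k : ℕ) + 1))[(k : ℕ)]'hklen := by
            rw [heq]
            rfl
          rw [hxe]
          exact List.getElem_mem hklen
        · have hkey_lt : key f < key x := by
            apply Finset.sum_lt_sum (fun i _ => hfle i)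
            have : ∃ i, f i ≠ x i := by
              by_contra h
              push_neg at h
              exact hne (funext h)
            obtain ⟨i, hi⟩ := this
            exact ⟨i, Finset.mem_univ i,
              lt_of_le_of_ne (hfle i) (fun h => hi (Fin.ext h))⟩
          obtain ⟨j, hjlen, hjf⟩ := List.mem_iff_getElem.mp hfl
          have hjk : j < (k : ℕ) + 1 := by
            by_contra h
            push_neg at h
            have hkj : (⟨(k : ℕ), k.isLt⟩ : Fin l.length) < ⟨j, hjlen⟩ :=
              Fin.mk_lt_mk.mpr (by omega)
            have hrel := hsorted.rel_get_of_lt hkj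
            have h1 : l.get ⟨j, hjlen⟩ = f := by
              rw [List.get_eq_getElem]
              exact hjf
            have h2 : l.get (⟨(k : ℕ), k.isLt⟩ : Fin l.length) = x := rfl
            rw [h1, h2] at hrel
            omega
          have hjlen' : j < (l.take ((k : ℕ) + 1)).length := by
            simp only [List.length_take]
            omega
          have : f = (l.take ((k : ℕ) + 1))[j]'hjlen' := by
            rw [List.getElem_take]
            exact hjf.symm
          rw [this]
          exact List.getElem_mem hjlen'

/-- Every weakly `K^d_{p_1,…,p_d}`-saturated hypergraph has at least
`n^d − q_n(p_1,…,p_d)` edges, and `W_n(p_1,…,p_d) = n^d − q_n(p_1,…,p_d)`. -/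
theorem WHyp_eq (n d : ℕ) (p : Fin d → ℕ) (hmono : Monotone p)
    (hp1 : ∀ i, 1 ≤ p i) (hpn : ∀ i, p i ≤ n) :
    (∀ E : Finset (Fin d → Fin n), WeakSatHyp n d p E →
      n ^ d - qn n d p ≤ E.card) ∧
    WHyp n d p = n ^ d - qn n d p := by
  have hlow : ∀ E : Finset (Fin d → Fin n), WeakSatHyp n d p E →
      n ^ d - qn n d p ≤ E.card := fun E hE => lower_bound n d p hmono hp1 E hE
  refine ⟨hlow, ?_⟩
  have hsat := upper_sat n d p hmono hp1 hpn
  have hcard : (Finset.univ \ Qset n d p).card = n ^ d - qn n d p := by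
    rw [Finset.card_sdiff_of_subset (Finset.subset_univ _), card_Qset]
    congr 1
    simp
  unfold WHyp
  apply le_antisymm
  · exact Nat.sInf_le ⟨_, hsat, hcard⟩
  · apply le_csInf
    · exact ⟨(Finset.univ \ Qset n d p).card, ⟨_, hsat, rfl⟩⟩
    · rintro m ⟨E, hE, rfl⟩
      exact hlow E hE
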